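/- Let K be a field, f ∈ K[x] a monic irreducible polynomial, and X ∈ Mat_n(K) a matrix whose minimal polynomial over K is a power of f. Let r ∈ K[x] be such that the minimal polynomial of r(X) over K is also a power of f and such that r(X) is not similar to X. Then X admits a Jordan–Chevalley decomposition over K: there exist S, N ∈ Mat_n(K) with X = S + N, S·N = N·S, N nilpotent, and S semisimple (that is, the minimal polynomial of S over K is squarefree). -/

import Mathlib

/-- Two square matrices are similar if they are conjugate by an invertible matrix. -/
def Matrix.Similar {K : Type*} [Field K] {n : ℕ} (A B : Matrix (Fin n) (Fin n) K) : Prop :=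
  ∃ g : (Matrix (Fin n) (Fin n) K)ˣ,
    (↑g⁻¹ : Matrix (Fin n) (Fin n) K) * A * (↑g : Matrix (Fin n) (Fin n) K) = B

namespace JCaux

open Polynomial

variable {K : Type*} [Field K]

lemma comp_sub_dvd (q a b : K[X]) : (a - b) ∣ q.comp a - q.comp b := by
  have h : ∀ c : K[X], q.comp c = (q.map C).eval c := by
    intro c; rw [eval_map]; rfl
  rw [h, h]
  exact sub_dvd_eval_sub a b _

lemma aeval_mk_comp (g q r : K[X]) :
    Polynomial.aeval (AdjoinRoot.mk g r) q = AdjoinRoot.mk g (q.comp r) := by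
  simp only [← AdjoinRoot.aeval_eq, aeval_comp]

lemma mem_span_singleton_iff_dvd (g x : K[X]) : x ∈ (Submodule.span K[X] {g}) ↔ g ∣ x := by
  rw [Ideal.submodule_span_eq, Ideal.mem_span_singleton]

section Sigma

variable {f r : K[X]}

lemma dvd_of_dvd_comp (hirr : Irreducible f) (hfr : f ∣ f.comp r)
    {q : K[X]} (hq : f ∣ q.comp r) : f ∣ q := by
  haveI := Fact.mk hirr
  set σ : AdjoinRoot f →ₐ[K] AdjoinRoot f :=
    AdjoinRoot.liftAlgHom f (Algebra.ofId K (AdjoinRoot f)) (AdjoinRoot.mk f r)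
      (show Polynomial.aeval (AdjoinRoot.mk f r) f = 0 by
        rw [aeval_mk_comp]; exact (AdjoinRoot.mk_eq_zero).mpr hfr) with hσ
  have hσmk : ∀ t : K[X], σ (AdjoinRoot.mk f t) = AdjoinRoot.mk f (t.comp r) := by
    intro t; rw [hσ]; exact aeval_mk_comp f t r
  have hinj : Function.Injective σ := σ.toRingHom.injective
  have h0 : σ (AdjoinRoot.mk f q) = σ 0 := by
    rw [hσmk, map_zero]; exact (AdjoinRoot.mk_eq_zero).mpr hq
  exact (AdjoinRoot.mk_eq_zero).mp (hinj h0)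

lemma exists_comp_congr_X (hirr : Irreducible f) (hfr : f ∣ f.comp r) :
    ∃ u : K[X], f ∣ u.comp r - Polynomial.X := by
  haveI := Fact.mk hirr
  haveI : FiniteDimensional K (AdjoinRoot f) := (AdjoinRoot.powerBasis hirr.ne_zero).finite
  set σ : AdjoinRoot f →ₐ[K] AdjoinRoot f :=
    AdjoinRoot.liftAlgHom f (Algebra.ofId K (AdjoinRoot f)) (AdjoinRoot.mk f r)
      (show Polynomial.aeval (AdjoinRoot.mk f r) f = 0 by
        rw [aeval_mk_comp]; exact (AdjoinRoot.mk_eq_zero).mpr hfr) with hσ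
  have hσmk : ∀ t : K[X], σ (AdjoinRoot.mk f t) = AdjoinRoot.mk f (t.comp r) := by
    intro t; rw [hσ]; exact aeval_mk_comp f t r
  have hinj : Function.Injective σ := σ.toRingHom.injective
  have hsurj : Function.Surjective σ :=
    LinearMap.injective_iff_surjective.mp (show Function.Injective σ.toLinearMap from hinj)
  obtain ⟨ub, hub⟩ := hsurj (AdjoinRoot.root f)
  obtain ⟨u, rfl⟩ := AdjoinRoot.mk_surjective ub
  refine ⟨u, ?_⟩
  rw [← AdjoinRoot.mk_eq_zero, map_sub, ← hσmk, hub, AdjoinRoot.mk_X, sub_self]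

lemma pow_dvd_of_pow_dvd_comp (hirr : Irreducible f) {w : K[X]} (hw : f.comp r = f * w)
    (hnw : ¬ f ∣ w) : ∀ (e : ℕ) (q : K[X]), f ^ e ∣ q.comp r → f ^ e ∣ q := by
  intro e
  induction e with
  | zero => intro q _; simpa using one_dvd q
  | succ e ih =>
    intro q hq
    have h1 : f ∣ q.comp r := dvd_trans (dvd_pow_self f e.succ_ne_zero) hq
    obtain ⟨q₁, rfl⟩ := dvd_of_dvd_comp hirr ⟨w, hw⟩ h1
    rw [mul_comp, hw] at hq
    have h2 : f ^ e ∣ w * q₁.comp r := by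
      rw [pow_succ'] at hq
      rw [mul_assoc] at hq
      exact (mul_dvd_mul_iff_left (hirr.ne_zero)).mp hq
    have h3 : IsCoprime (f ^ e) w := ((hirr.coprime_iff_not_dvd).mpr hnw).pow_left
    have h4 : f ^ e ∣ q₁.comp r := h3.dvd_of_dvd_mul_left h2
    rw [pow_succ']
    exact mul_dvd_mul_left f (ih _ h4)

lemma pow_dvd_comp_of_pow_dvd {w : K[X]} (hw : f.comp r = f * w) (e : ℕ) (q : K[X])
    (h : f ^ e ∣ q) : f ^ e ∣ q.comp r := by
  obtain ⟨c, rfl⟩ := h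
  rw [mul_comp, pow_comp, hw, mul_pow]
  exact Dvd.dvd.mul_right (Dvd.dvd.mul_right dvd_rfl _) _

end Sigma


section Block

variable {f r w : K[X]}

lemma block_finite (hmonic : f.Monic) (e : ℕ) :
    Module.Finite K (K[X] ⧸ (Submodule.span K[X] {f ^ e})) := by
  set q : Submodule K[X] K[X] := Submodule.span K[X] {f ^ e} with hqdef
  have hmon : (f ^ e).Monic := hmonic.pow e
  haveI : Module.Finite K (Polynomial.degreeLT K ((f ^ e).natDegree)) :=
    Module.Finite.equiv (Polynomial.degreeLTEquiv K _).symm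
  refine Module.Finite.of_surjective
    (((Submodule.mkQ q).restrictScalars K).comp
      (Polynomial.degreeLT K ((f ^ e).natDegree)).subtype) ?_
  intro t0
  obtain ⟨t, rfl⟩ := Submodule.Quotient.mk_surjective q t0
  refine ⟨⟨t %ₘ (f ^ e), ?_⟩, ?_⟩
  · rw [Polynomial.mem_degreeLT]
    calc (t %ₘ (f ^ e)).degree < (f ^ e).degree := Polynomial.degree_modByMonic_lt t hmon
    _ ≤ ((f ^ e).natDegree : WithBot ℕ) := Polynomial.degree_le_natDegree
  · show Submodule.Quotient.mk (t %ₘ (f ^ e)) = Submodule.Quotient.mk t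
    rw [Submodule.Quotient.eq, hqdef, mem_span_singleton_iff_dvd,
      Polynomial.modByMonic_eq_sub_mul_div t (f ^ e), sub_sub_cancel_left]
    exact dvd_neg.mpr (dvd_mul_right _ _)

lemma block_equiv (hmonic : f.Monic) (hirr : Irreducible f) (hw : f.comp r = f * w)
    (hnw : ¬ f ∣ w) (e : ℕ) :
    ∃ τ : (K[X] ⧸ (Submodule.span K[X] {f ^ e})) ≃ₗ[K] (K[X] ⧸ (Submodule.span K[X] {f ^ e})),
      ∀ b, τ ((Polynomial.X : K[X]) • b) = (r : K[X]) • τ b := by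
  set q : Submodule K[X] K[X] := Submodule.span K[X] {f ^ e} with hqdef
  set B : K[X] →ₗ[K] K[X] := (Polynomial.aeval r).toLinearMap with hBdef
  have hcond : q.restrictScalars K ≤ (q.restrictScalars K).comap B := by
    intro x hx
    simp only [Submodule.restrictScalars_mem, Submodule.mem_comap] at hx ⊢
    rw [hqdef, mem_span_singleton_iff_dvd] at hx ⊢
    show f ^ e ∣ (Polynomial.aeval r) x
    rw [← comp_eq_aeval]
    exact pow_dvd_comp_of_pow_dvd hw e x hx
  set τ0 := Submodule.mapQ (q.restrictScalars K) (q.restrictScalars K) B hcond with hτ0def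
  set ρ := Submodule.Quotient.restrictScalarsEquiv K q with hρdef
  set τ1 : (K[X] ⧸ q) →ₗ[K] (K[X] ⧸ q) :=
    ρ.toLinearMap ∘ₗ τ0 ∘ₗ ρ.symm.toLinearMap with hτ1def
  have hτ1mk : ∀ t : K[X], τ1 (Submodule.Quotient.mk t) = Submodule.Quotient.mk (t.comp r) := by
    intro t
    rw [hτ1def]
    simp only [LinearMap.comp_apply, LinearEquiv.coe_toLinearMap, hρdef,
      Submodule.Quotient.restrictScalarsEquiv_symm_mk, hτ0def, Submodule.mapQ_apply,
      Submodule.Quotient.restrictScalarsEquiv_mk, hBdef, AlgHom.toLinearMap_apply]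
    rw [comp_eq_aeval]
  have hinj : Function.Injective τ1 := by
    rw [injective_iff_map_eq_zero]
    intro a ha
    obtain ⟨t, rfl⟩ := Submodule.Quotient.mk_surjective q a
    rw [hτ1mk] at ha
    rw [Submodule.Quotient.mk_eq_zero] at ha ⊢
    rw [hqdef, mem_span_singleton_iff_dvd] at ha ⊢
    exact pow_dvd_of_pow_dvd_comp hirr hw hnw e t ha
  haveI : Module.Finite K (K[X] ⧸ q) := block_finite hmonic e
  have hsurj : Function.Surjective τ1 := LinearMap.injective_iff_surjective.mp hinj
  refine ⟨LinearEquiv.ofBijective τ1 ⟨hinj, hsurj⟩, ?_⟩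
  intro b
  obtain ⟨t, rfl⟩ := Submodule.Quotient.mk_surjective q b
  have h1 : (Polynomial.X : K[X]) • (Submodule.Quotient.mk t : K[X] ⧸ q)
      = Submodule.Quotient.mk (Polynomial.X * t) := by
    rw [← Submodule.Quotient.mk_smul, smul_eq_mul]
  have h2 : ∀ t : K[X], (r : K[X]) • (Submodule.Quotient.mk t : K[X] ⧸ q)
      = Submodule.Quotient.mk (r * t) := by
    intro t; rw [← Submodule.Quotient.mk_smul, smul_eq_mul]
  rw [h1]
  show τ1 _ = (r : K[X]) • τ1 _
  rw [hτ1mk, hτ1mk, Polynomial.mul_comp, Polynomial.X_comp, h2]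

end Block


section Similar

variable {f r w : K[X]}

lemma similar_aux (n : ℕ) (A : Matrix (Fin n) (Fin n) K) (hmonic : f.Monic)
    (hirr : Irreducible f) {m₀ : ℕ} (hm₀ : m₀ ≠ 0) (hA : minpoly K A = f ^ m₀)
    (hw : f.comp r = f * w) (hnw : ¬ f ∣ w) :
    ∃ g : (Matrix (Fin n) (Fin n) K)ˣ,
      (↑g⁻¹ : Matrix (Fin n) (Fin n) K) * (Polynomial.aeval A r)
        * (↑g : Matrix (Fin n) (Fin n) K) = A := by
  classical
  set T := (Matrix.toLinAlgEquiv' :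
    Matrix (Fin n) (Fin n) K ≃ₐ[K] ((Fin n → K) →ₗ[K] (Fin n → K))) with hT
  set φ := T A with hφ
  have haeval : ∀ p : K[X], Polynomial.aeval φ p = T (Polynomial.aeval A p) := fun p =>
    Polynomial.aeval_algHom_apply T A p
  have hkill : Polynomial.aeval φ (f ^ m₀) = 0 := by
    rw [haeval, ← hA, minpoly.aeval, map_zero]
  have hkillall : ∀ x : Module.AEval' φ, (f ^ m₀ : K[X]) • x = 0 := by
    intro x
    apply (Module.AEval'.of φ).symm.injective
    rw [Module.AEval.of_symm_smul, hkill, map_zero]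
    simp
  have htor : Module.IsTorsion K[X] (Module.AEval' φ) := by
    intro x
    exact ⟨⟨f ^ m₀, mem_nonZeroDivisors_of_ne_zero (pow_ne_zero _ hirr.ne_zero)⟩, hkillall x⟩
  obtain ⟨ι, hι, p, hp, e, ⟨E⟩⟩ := Module.equiv_directSum_of_isTorsion htor
  haveI := hι
  have hspan : ∀ i,
      (Submodule.span K[X] {p i ^ e i}) = (Submodule.span K[X] {f ^ e i}) := by
    intro i
    rcases Nat.eq_zero_or_pos (e i) with h0 | hpos
    · rw [h0, pow_zero, pow_zero]
    · have hdvd : p i ^ e i ∣ f ^ m₀ := by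
        have hx := hkillall (E.symm (DirectSum.lof K[X] ι
          (fun j => K[X] ⧸ (Submodule.span K[X] {p j ^ e j})) i (Submodule.Quotient.mk 1)))
        have hx2 := congrArg E hx
        rw [map_smul, E.apply_symm_apply, map_zero, ← map_smul] at hx2
        have hx3 : (f ^ m₀ : K[X]) • (Submodule.Quotient.mk 1 :
            K[X] ⧸ Submodule.span K[X] {p i ^ e i}) = 0 := by
          have h := congrArg (fun z => z i) hx2
          simpa only [DirectSum.lof_apply, DirectSum.zero_apply] using h
        rw [← Submodule.Quotient.mk_smul, smul_eq_mul, mul_one,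
          Submodule.Quotient.mk_eq_zero, mem_span_singleton_iff_dvd] at hx3
        exact hx3
      have hpf : p i ∣ f :=
        (UniqueFactorizationMonoid.irreducible_iff_prime.mp (hp i)).dvd_of_dvd_pow
          (dvd_trans (dvd_pow_self _ hpos.ne') hdvd)
      rw [Ideal.submodule_span_eq, Ideal.submodule_span_eq]
      exact Ideal.span_singleton_eq_span_singleton.mpr
        (((hp i).associated_of_dvd hirr hpf).pow_pow)
  set E2 : Module.AEval' φ ≃ₗ[K[X]] DirectSum ι fun i => K[X] ⧸ (Submodule.span K[X] {f ^ e i}) :=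
    E.trans (DFinsupp.mapRange.linearEquiv
      (fun i => Submodule.quotEquivOfEq _ _ (hspan i))) with hE2
  choose τ hτ using fun i => block_equiv (w := w) hmonic hirr hw hnw (e i)
  set Ψ := DFinsupp.mapRange.linearEquiv τ with hΨdef
  have hΨ : ∀ c : DirectSum ι fun i => K[X] ⧸ (Submodule.span K[X] {f ^ e i}),
      Ψ ((Polynomial.X : K[X]) • c) = (r : K[X]) • Ψ c := by
    intro c
    ext i
    rw [hΨdef]
    simp only [DFinsupp.mapRange.linearEquiv_apply, DFinsupp.mapRange_apply,
      DFinsupp.smul_apply]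
    exact hτ i _
  set Φ : Module.AEval' φ ≃ₗ[K] Module.AEval' φ :=
    (E2.restrictScalars K).trans (Ψ.trans (E2.restrictScalars K).symm) with hΦdef
  have hΦapp : ∀ y : Module.AEval' φ, Φ y = E2.symm (Ψ (E2 y)) := fun y => rfl
  have hΦs : ∀ x : Module.AEval' φ,
      Φ ((Polynomial.X : K[X]) • x) = (r : K[X]) • Φ x := by
    intro x
    rw [hΦapp, hΦapp, map_smul, hΨ, map_smul]
  set ΨV : (Fin n → K) ≃ₗ[K] (Fin n → K) :=
    ((Module.AEval'.of φ).trans Φ).trans (Module.AEval'.of φ).symm with hΨVdef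
  have hint : ∀ v, ΨV (φ v) = (Polynomial.aeval φ r) (ΨV v) := by
    intro v
    have h1 : (Module.AEval'.of φ) (φ v) = (Polynomial.X : K[X]) • (Module.AEval'.of φ) v :=
      (Module.AEval'.X_smul_of φ v).symm
    show (Module.AEval'.of φ).symm (Φ ((Module.AEval'.of φ) (φ v))) = _
    rw [h1, hΦs, Module.AEval.of_symm_smul]
    rfl
  have hlin : ∀ B : Matrix (Fin n) (Fin n) K,
      (Matrix.toLinAlgEquiv' B : (Fin n → K) →ₗ[K] (Fin n → K)) = Matrix.toLin' B := by
    intro B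
    apply LinearMap.ext
    intro v
    rw [Matrix.toLinAlgEquiv'_apply, Matrix.toLin'_apply]
  have hφA : LinearMap.toMatrix' φ = A := by
    rw [hφ, hT, hlin, LinearMap.toMatrix'_toLin']
  have haevalmat : LinearMap.toMatrix' (Polynomial.aeval φ r) = Polynomial.aeval A r := by
    rw [haeval, hT, hlin, LinearMap.toMatrix'_toLin']
  have hGG' : LinearMap.toMatrix' (ΨV : (Fin n → K) →ₗ[K] (Fin n → K))
      * LinearMap.toMatrix' (ΨV.symm : (Fin n → K) →ₗ[K] (Fin n → K)) = 1 := by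
    rw [← LinearMap.toMatrix'_comp]
    have h : (ΨV : (Fin n → K) →ₗ[K] (Fin n → K)) ∘ₗ
        (ΨV.symm : (Fin n → K) →ₗ[K] (Fin n → K)) = LinearMap.id := by
      apply LinearMap.ext; intro v
      simp
    rw [h, LinearMap.toMatrix'_id]
  have hG'G : LinearMap.toMatrix' (ΨV.symm : (Fin n → K) →ₗ[K] (Fin n → K))
      * LinearMap.toMatrix' (ΨV : (Fin n → K) →ₗ[K] (Fin n → K)) = 1 := by
    rw [← LinearMap.toMatrix'_comp]
    have h : (ΨV.symm : (Fin n → K) →ₗ[K] (Fin n → K)) ∘ₗ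
        (ΨV : (Fin n → K) →ₗ[K] (Fin n → K)) = LinearMap.id := by
      apply LinearMap.ext; intro v
      simp
    rw [h, LinearMap.toMatrix'_id]
  have hrel : LinearMap.toMatrix' (ΨV : (Fin n → K) →ₗ[K] (Fin n → K)) * A
      = (Polynomial.aeval A r) * LinearMap.toMatrix' (ΨV : (Fin n → K) →ₗ[K] (Fin n → K)) := by
    rw [← haevalmat, ← hφA, ← LinearMap.toMatrix'_comp, ← LinearMap.toMatrix'_comp]
    congr 1
    apply LinearMap.ext
    intro v
    exact hint v
  refine ⟨⟨LinearMap.toMatrix' (ΨV : (Fin n → K) →ₗ[K] (Fin n → K)),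
    LinearMap.toMatrix' (ΨV.symm : (Fin n → K) →ₗ[K] (Fin n → K)), hGG', hG'G⟩, ?_⟩
  show LinearMap.toMatrix' (ΨV.symm : (Fin n → K) →ₗ[K] (Fin n → K))
      * ((Polynomial.aeval A) r) * LinearMap.toMatrix' (ΨV : (Fin n → K) →ₗ[K] (Fin n → K)) = A
  rw [mul_assoc, ← hrel, ← mul_assoc, hG'G, one_mul]

end Similar

end JCaux

/-- Let `X` be a matrix whose minimal polynomial is a power of the monic irreducible
polynomial `f`, and let `r` be a polynomial such that the minimal polynomial of `r(X)` is
also a power of `f`, and `r(X)` is not similar to `X`. Then `X` has a Jordan–Chevalley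
decomposition `X = S + N` with `S` semisimple (squarefree minimal polynomial),
`N` nilpotent and `S`, `N` commuting. -/
theorem jordan_chevalley_of_not_similar
    (K : Type*) [Field K] (n : ℕ) (X : Matrix (Fin n) (Fin n) K)
    (f : Polynomial K) (hmonic : f.Monic) (hirr : Irreducible f)
    (hX : ∃ m : ℕ, minpoly K X = f ^ m)
    (r : Polynomial K)
    (hr : ∃ m : ℕ, minpoly K (Polynomial.aeval X r) = f ^ m)
    (hns : ¬ (Polynomial.aeval X r).Similar X) :
    ∃ S N : Matrix (Fin n) (Fin n) K,
      X = S + N ∧ S * N = N * S ∧ IsNilpotent N ∧ Squarefree (minpoly K S) := by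
  classical
  obtain ⟨m, hm⟩ := hX
  obtain ⟨k, hk⟩ := hr
  rcases subsingleton_or_nontrivial (Matrix (Fin n) (Fin n) K) with hss | hnt
  · refine ⟨X, 0, by simp, by simp, ⟨1, by simp⟩, ?_⟩
    have h1 : minpoly K X ∣ 1 := minpoly.dvd K X (Subsingleton.elim _ _)
    exact squarefree_one.squarefree_of_dvd h1
  · have hm1 : m ≠ 0 := by
      rintro rfl
      rw [pow_zero] at hm
      have h := minpoly.aeval K X
      rw [hm, map_one] at h
      exact one_ne_zero h
    have hk1 : k ≠ 0 := by
      rintro rfl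
      rw [pow_zero] at hk
      have h := minpoly.aeval K (Polynomial.aeval X r)
      rw [hk, map_one] at h
      exact one_ne_zero h
    have hfr : f ∣ f.comp r := by
      have h0 : Polynomial.aeval X ((f ^ k).comp r) = 0 := by
        rw [Polynomial.aeval_comp, ← hk, minpoly.aeval]
      have hdvd : minpoly K X ∣ (f ^ k).comp r := minpoly.dvd K X h0
      rw [hm, Polynomial.pow_comp] at hdvd
      have h1 : f ∣ (f.comp r) ^ k := dvd_trans (dvd_pow_self f hm1) hdvd
      exact (UniqueFactorizationMonoid.irreducible_iff_prime.mp hirr).dvd_of_dvd_pow h1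
    by_cases h2 : f ^ 2 ∣ f.comp r
    · -- `f²` divides `f ∘ r`: build the decomposition from a polynomial `s` with
      -- `f ∣ s - X` and `f ^ m ∣ f ∘ s`.
      obtain ⟨u, hu⟩ := JCaux.exists_comp_congr_X hirr hfr
      have hfu : f ∣ f.comp u := by
        apply JCaux.dvd_of_dvd_comp hirr hfr
        rw [Polynomial.comp_assoc]
        have h3 : (u.comp r - Polynomial.X) ∣ f.comp (u.comp r) - f := by
          simpa [Polynomial.comp_X] using JCaux.comp_sub_dvd f (u.comp r) Polynomial.X
        have h4 : f ∣ f.comp (u.comp r) - f := dvd_trans hu h3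
        simpa [sub_add_cancel] using dvd_add h4 (dvd_refl f)
      have hs0x : f ∣ u.comp r - Polynomial.X := hu
      have hs02 : f ^ 2 ∣ f.comp (u.comp r) := by
        rw [← Polynomial.comp_assoc]
        obtain ⟨w', hw'⟩ := hfu
        rw [hw', Polynomial.mul_comp]
        exact Dvd.dvd.mul_right h2 _
      have hiter : ∀ j : ℕ, ∃ s : Polynomial K,
          f ∣ s - Polynomial.X ∧ f ^ (j + 2) ∣ f.comp s := by
        intro j
        induction j with
        | zero => exact ⟨u.comp r, hs0x, by simpa using hs02⟩
        | succ j ih =>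
          obtain ⟨s, hsx, hfs⟩ := ih
          refine ⟨(u.comp r).comp s, ?_, ?_⟩
          · have h5 : (s - Polynomial.X) ∣ (u.comp r).comp s - (u.comp r).comp Polynomial.X :=
              JCaux.comp_sub_dvd _ _ _
            rw [Polynomial.comp_X] at h5
            have h6 : f ∣ (u.comp r).comp s - u.comp r := dvd_trans hsx h5
            have h7 := dvd_add h6 hu
            simpa [sub_add_sub_cancel] using h7
          · rw [← Polynomial.comp_assoc]
            obtain ⟨t, ht⟩ := hs02
            rw [ht, Polynomial.mul_comp, Polynomial.pow_comp]
            have h7 : f ^ (j + 1 + 2) ∣ (f.comp s) ^ 2 :=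
              dvd_trans (by rw [← pow_mul]; exact pow_dvd_pow f (by omega))
                (pow_dvd_pow_of_dvd hfs 2)
            exact Dvd.dvd.mul_right h7 _
      obtain ⟨s, hsx, hfs⟩ := hiter m
      have hfsm : f ^ m ∣ f.comp s := dvd_trans (pow_dvd_pow f (by omega)) hfs
      have hN : X - Polynomial.aeval X s = Polynomial.aeval X (Polynomial.X - s) := by
        rw [map_sub, Polynomial.aeval_X]
      refine ⟨Polynomial.aeval X s, X - Polynomial.aeval X s, by abel, ?_, ?_, ?_⟩
      · rw [hN, ← map_mul, ← map_mul, mul_comm]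
      · refine ⟨m, ?_⟩
        rw [hN, ← map_pow]
        have hdvd : minpoly K X ∣ (Polynomial.X - s) ^ m := by
          rw [hm]
          have h8 : (Polynomial.X - s : Polynomial K) = -(s - Polynomial.X) := by ring
          rw [h8, neg_pow]
          exact Dvd.dvd.mul_left (pow_dvd_pow_of_dvd hsx m) _
        obtain ⟨c, hc⟩ := hdvd
        rw [hc, map_mul, minpoly.aeval, zero_mul]
      · have hSf : Polynomial.aeval (Polynomial.aeval X s) f = 0 := by
          rw [← Polynomial.aeval_comp]
          obtain ⟨c, hc⟩ := hfsm
          rw [hc, map_mul, ← hm, minpoly.aeval, zero_mul]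
        have hdvd : minpoly K (Polynomial.aeval X s) ∣ f := minpoly.dvd K _ hSf
        exact Squarefree.squarefree_of_dvd hdvd hirr.squarefree
    · -- `f² ∤ f ∘ r` : then `r(X)` is similar to `X`, contradiction.
      obtain ⟨w, hw⟩ := hfr
      have hnw : ¬ f ∣ w := by
        rintro ⟨w', hw'⟩
        exact h2 ⟨w', by rw [hw, hw']; ring⟩
      obtain ⟨g, hg⟩ := JCaux.similar_aux n X hmonic hirr hm1 hm hw hnw
      exact absurd ⟨g, hg⟩ hns
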